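/- arXiv:1401.0459 — 5 statements merged into one kernel-verified Lean document; each statement's English description precedes it below -/
import Mathlib

section
/- Let R be a Bézout ring. Then the polynomial ring R[X] is Gaussian over R, i.e., for all f, g ∈ R[X], c(fg) = c(f)·c(g). -/
open Polynomial

/-- A proper ideal `I` is `n`-absorbing if whenever a product of `n+1` elements lies in `I`,
the product of some `n` of them lies in `I`. -/
def IsNAbsorbing {R : Type*} [CommRing R] (I : Ideal R) (n : ℕ) : Prop :=
  I ≠ ⊤ ∧ ∀ x : Fin (n + 1) → R, (∏ i, x i) ∈ I →
    ∃ j, (∏ i ∈ Finset.univ.erase j, x i) ∈ I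

/-- A proper ideal `I` is strongly `n`-absorbing if whenever a product of `n+1` ideals is
contained in `I`, the product of some `n` of them is contained in `I`. -/
def IsStronglyNAbsorbing {R : Type*} [CommRing R] (I : Ideal R) (n : ℕ) : Prop :=
  I ≠ ⊤ ∧ ∀ J : Fin (n + 1) → Ideal R, (∏ i, J i) ≤ I →
    ∃ j, (∏ i ∈ Finset.univ.erase j, J i) ≤ I

/-- The content of a polynomial: the ideal generated by its coefficients. -/
def polyContent {R : Type*} [CommRing R] (f : R[X]) : Ideal R :=
  Ideal.span (Set.range f.coeff)

section Aux

variable {R : Type*} [CommRing R]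

lemma coeff_mem_polyContent (f : R[X]) (i : ℕ) : f.coeff i ∈ polyContent f :=
  Ideal.subset_span ⟨i, rfl⟩

lemma polyContent_le_iff {f : R[X]} {I : Ideal R} :
    polyContent f ≤ I ↔ ∀ i, f.coeff i ∈ I := by
  rw [polyContent, Ideal.span_le, Set.range_subset_iff]; rfl

lemma polyContent_fg (f : R[X]) : (polyContent f).FG := by
  classical
  refine ⟨insert 0 ((Finset.range (f.natDegree + 1)).image f.coeff), le_antisymm ?_ ?_⟩
  · rw [Ideal.span_le]
    intro x hx
    simp only [Finset.coe_insert, Set.mem_insert_iff, Finset.coe_image, Set.mem_image,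
      SetLike.mem_coe] at hx ⊢
    rcases hx with rfl | ⟨i, _, rfl⟩
    · exact (polyContent f).zero_mem
    · exact coeff_mem_polyContent f i
  · rw [polyContent_le_iff]
    intro i
    by_cases h : i ≤ f.natDegree
    · apply Ideal.subset_span
      simp only [Finset.coe_insert, Set.mem_insert_iff, Finset.coe_image, Set.mem_image]
      exact Or.inr ⟨i, Finset.mem_coe.2 (Finset.mem_range.2 (Nat.lt_succ_of_le h)), rfl⟩
    · rw [f.coeff_eq_zero_of_natDegree_lt (lt_of_not_ge h)]
      exact Ideal.zero_mem _

lemma polyContent_C_mul (a : R) (f : R[X]) :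
    polyContent (C a * f) = Ideal.span {a} * polyContent f := by
  apply le_antisymm
  · rw [polyContent_le_iff]
    intro i
    rw [coeff_C_mul]
    exact Ideal.mem_span_singleton_mul.2 ⟨f.coeff i, coeff_mem_polyContent f i, rfl⟩
  · rw [Ideal.span_singleton_mul_le_iff]
    intro z hz
    refine Submodule.span_induction ?_ ?_ ?_ ?_ hz
    · rintro x ⟨i, rfl⟩
      rw [← coeff_C_mul]
      exact coeff_mem_polyContent _ i
    · rw [mul_zero]; exact Ideal.zero_mem _
    · intro x y _ _ hx hy; rw [mul_add]; exact Ideal.add_mem _ hx hy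
    · intro r x _ hx
      have h : a * (r • x) = r * (a * x) := by rw [smul_eq_mul]; ring
      rw [h]
      exact Ideal.mul_mem_left _ r hx

lemma polyContent_factor [IsBezout R] (f : R[X]) :
    ∃ (a : R) (f₁ : R[X]) (s : R), f = C a * f₁ ∧ s ∈ polyContent f₁ ∧ a * s = a ∧
      polyContent f = Ideal.span {a} := by
  obtain ⟨a, ha⟩ := (IsBezout.isPrincipal_of_FG _ (polyContent_fg f)).principal
  rw [Ideal.submodule_span_eq] at ha
  have hco : ∀ i, ∃ b, a * b = f.coeff i := by
    intro i
    obtain ⟨b, hb⟩ := Ideal.mem_span_singleton'.1 (ha ▸ coeff_mem_polyContent f i)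
    exact ⟨b, by rw [mul_comm]; exact hb⟩
  choose b hb using hco
  set f₁ : R[X] := ∑ i ∈ f.support, monomial i (b i) with hf₁
  have hff : f = C a * f₁ := by
    rw [hf₁, Finset.mul_sum]
    conv_lhs => rw [f.as_sum_support]
    exact Finset.sum_congr rfl fun i _ => by rw [C_mul_monomial, hb]
  have hmem : a ∈ Ideal.span {a} * polyContent f₁ := by
    rw [← polyContent_C_mul, ← hff, ha]
    exact Ideal.mem_span_singleton_self a
  obtain ⟨s, hs, has⟩ := Ideal.mem_span_singleton_mul.1 hmem
  exact ⟨a, f₁, s, hff, hs, has, ha⟩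

lemma polyContent_mul_le (f g : R[X]) :
    polyContent (f * g) ≤ polyContent f * polyContent g := by
  rw [polyContent_le_iff]
  intro n
  rw [coeff_mul]
  exact Ideal.sum_mem _ fun x _ =>
    Ideal.mul_mem_mul (coeff_mem_polyContent f x.1) (coeff_mem_polyContent g x.2)

lemma polyContent_mul_le_radical (f g : R[X]) :
    polyContent f * polyContent g ≤ (polyContent (f * g)).radical := by
  rw [Ideal.radical_eq_sInf]
  refine le_sInf ?_
  rintro p ⟨hle, hp⟩
  have hmap : f.map (Ideal.Quotient.mk p) * g.map (Ideal.Quotient.mk p) = 0 := by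
    rw [← Polynomial.map_mul]
    ext i
    rw [coeff_map, coeff_zero, Ideal.Quotient.eq_zero_iff_mem]
    exact hle (coeff_mem_polyContent _ i)
  have key : ∀ h : R[X], h.map (Ideal.Quotient.mk p) = 0 → polyContent h ≤ p := by
    intro h hh
    rw [polyContent_le_iff]
    intro i
    rw [← Ideal.Quotient.eq_zero_iff_mem, ← coeff_map, hh, coeff_zero]
  rcases mul_eq_zero.1 hmap with h | h
  · exact le_trans Ideal.mul_le_left (key f h)
  · exact le_trans Ideal.mul_le_right (key g h)

end Aux

/-- Over a Bézout ring, the polynomial ring is Gaussian: `c(fg) = c(f)c(g)`. -/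
theorem polyContent_mul_of_isBezout {R : Type*} [CommRing R] [IsBezout R] (f g : R[X]) :
    polyContent (f * g) = polyContent f * polyContent g := by
  obtain ⟨a, f₁, s, hf, hs, has, hcf⟩ := polyContent_factor f
  obtain ⟨b, g₁, t, hg, ht, hbt, hcg⟩ := polyContent_factor g
  obtain ⟨k, hk⟩ : ∃ k, (s * t) ^ k ∈ polyContent (f₁ * g₁) :=
    polyContent_mul_le_radical f₁ g₁ (Ideal.mul_mem_mul hs ht)
  have hak : ∀ k : ℕ, a * s ^ k = a := by
    intro k; induction k with
    | zero => simp
    | succ n ih => rw [pow_succ, ← mul_assoc, ih, has]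
  have hbk : ∀ k : ℕ, b * t ^ k = b := by
    intro k; induction k with
    | zero => simp
    | succ n ih => rw [pow_succ, ← mul_assoc, ih, hbt]
  have hfg : f * g = C (a * b) * (f₁ * g₁) := by
    rw [hf, hg, C_mul]; ring
  rw [hfg, polyContent_C_mul, hcf, hcg, Ideal.span_singleton_mul_span_singleton]
  apply le_antisymm Ideal.mul_le_left
  rw [Ideal.span_singleton_le_iff_mem]
  refine Ideal.mem_span_singleton_mul.2 ⟨(s * t) ^ k, hk, ?_⟩
  calc a * b * (s * t) ^ k = (a * s ^ k) * (b * t ^ k) := by rw [mul_pow]; ring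
  _ = a * b := by rw [hak, hbk]
end

section
/- Let R be a reduced commutative ring. Then R[X] is an Armendariz R-algebra: for all f, g ∈ R[X], if fg = 0 then c(f)·c(g) = (0), equivalently a·b = 0 for every coefficient a of f and every coefficient b of g. -/
open Polynomial

lemma armendariz_key {R : Type*} [CommRing R] [IsReduced R] (f g : R[X])
    (h : f * g = 0) : ∀ n p q : ℕ, p + q = n → f.coeff p * g.coeff q = 0 := by
  set a := f.coeff with ha
  set b := g.coeff with hb
  intro n
  induction n using Nat.strong_induction_on with
  | _ n IH =>
  have S : ∑ k ∈ Finset.range (n + 1), a k * b (n - k) = 0 := by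
    have := Polynomial.coeff_mul f g n
    rw [h, Polynomial.coeff_zero] at this
    rw [Finset.Nat.sum_antidiagonal_eq_sum_range_succ (fun i j => a i * b j)] at this
    exact this.symm
  -- inner induction: ∀ p ≤ n, a p * b (n - p) = 0
  have inner : ∀ p, p ≤ n → a p * b (n - p) = 0 := by
    intro p
    induction p using Nat.strong_induction_on with
    | _ p IHp =>
    intro hpn
    have hS2 : ∑ k ∈ Finset.range (n + 1), a p * (a k * b (n - k)) = 0 := by
      rw [← Finset.mul_sum, S, mul_zero]
    have hterms : ∀ k ∈ Finset.range (n + 1), k ≠ p → a p * (a k * b (n - k)) = 0 := by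
      intro k hk hkp
      rcases lt_or_gt_of_ne hkp with hlt | hgt
      · rw [IHp k hlt (le_trans hlt.le hpn), mul_zero]
      · have h1 : a p * b (n - k) = 0 := by
          apply IH (p + (n - k)) _ p (n - k) rfl
          have hk' : k ≤ n := Nat.lt_succ_iff.mp (Finset.mem_range.mp hk)
          omega
        calc a p * (a k * b (n - k)) = a k * (a p * b (n - k)) := by ring
          _ = 0 := by rw [h1, mul_zero]
    have hsingle : a p * (a p * b (n - p)) = 0 := by
      have := Finset.sum_eq_single p hterms (by
        intro hpmem
        exact absurd (Finset.mem_range.mpr (Nat.lt_succ_of_le hpn)) hpmem)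
      rw [this] at hS2
      exact hS2
    have hnil : IsNilpotent (a p * b (n - p)) := by
      refine ⟨2, ?_⟩
      have : (a p * b (n - p)) ^ 2 = (a p * (a p * b (n - p))) * b (n - p) := by ring
      rw [this, hsingle, zero_mul]
    exact hnil.eq_zero
  intro p q hpq
  have := inner p (by omega)
  rwa [show n - p = q by omega] at this


/-- A reduced ring is Armendariz: `fg = 0` implies `c(f)c(g) = 0`, equivalently all products
of a coefficient of `f` with a coefficient of `g` vanish. -/
theorem armendariz_of_isReduced {R : Type*} [CommRing R] [IsReduced R] (f g : R[X])
    (h : f * g = 0) :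
    polyContent f * polyContent g = ⊥ ∧ ∀ i j : ℕ, f.coeff i * g.coeff j = 0 := by
  have key := armendariz_key f g h
  refine ⟨?_, fun i j => key (i + j) i j rfl⟩
  rw [polyContent, polyContent, Ideal.span_mul_span, Ideal.span_eq_bot]
  intro x hx
  rw [Set.mem_mul] at hx
  obtain ⟨s, ⟨i, rfl⟩, t, ⟨j, rfl⟩, rfl⟩ := hx
  exact key (i + j) i j rfl
end

section
/- Let R be a commutative ring such that the zero ideal is p-primary for a prime ideal p with p² = (0). Then R[X] is an Armendariz R-algebra: fg = 0 implies c(f)·c(g) = (0) for all f, g ∈ R[X]. -/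
open Polynomial

private lemma zero_of_min_coeff {R : Type*} [CommRing R] (p : Ideal R)
    (hp : p.IsPrime) (hprimary : (⊥ : Ideal R).IsPrimary)
    (hrad : (⊥ : Ideal R).radical = p) (hp2 : p ^ 2 = ⊥) (f g : R[X])
    (h : f * g = 0) (i : ℕ) (hi : f.coeff i ∉ p)
    (himin : ∀ a, a < i → f.coeff a ∈ p) : g = 0 := by
  have hmemp : ∀ j, g.coeff j ∈ p := by
    intro j
    induction j using Nat.strong_induction_on with
    | _ j ih =>
      have hc : (f * g).coeff (i + j) = 0 := by rw [h]; simp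
      rw [coeff_mul] at hc
      have hmem : ((i, j) : ℕ × ℕ) ∈ Finset.HasAntidiagonal.antidiagonal (i + j) := by simp
      rw [← Finset.add_sum_erase _ _ hmem] at hc
      have hsum : ∑ x ∈ (Finset.HasAntidiagonal.antidiagonal (i + j)).erase (i, j),
          f.coeff x.1 * g.coeff x.2 ∈ p := by
        apply Ideal.sum_mem
        intro x hx
        obtain ⟨hne, hx⟩ := Finset.mem_erase.mp hx
        rw [Finset.HasAntidiagonal.mem_antidiagonal] at hx
        rcases lt_trichotomy x.1 i with h1 | h1 | h1
        · exact Ideal.mul_mem_right _ _ (himin _ h1)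
        · exact absurd (Prod.ext h1 (by omega)) hne
        · exact Ideal.mul_mem_left _ _ (ih x.2 (by omega))
      have hfg : f.coeff i * g.coeff j ∈ p := by
        rw [eq_neg_of_add_eq_zero_left hc]
        exact p.neg_mem hsum
      exact (hp.mem_or_mem hfg).resolve_left hi
  have hzero : ∀ j, g.coeff j = 0 := by
    intro j
    induction j using Nat.strong_induction_on with
    | _ j ih =>
      have hc : (f * g).coeff (i + j) = 0 := by rw [h]; simp
      rw [coeff_mul] at hc
      have hmem : ((i, j) : ℕ × ℕ) ∈ Finset.HasAntidiagonal.antidiagonal (i + j) := by simp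
      rw [← Finset.add_sum_erase _ _ hmem] at hc
      have hsum : ∑ x ∈ (Finset.HasAntidiagonal.antidiagonal (i + j)).erase (i, j),
          f.coeff x.1 * g.coeff x.2 = 0 := by
        apply Finset.sum_eq_zero
        intro x hx
        obtain ⟨hne, hx⟩ := Finset.mem_erase.mp hx
        rw [Finset.HasAntidiagonal.mem_antidiagonal] at hx
        rcases lt_trichotomy x.1 i with h1 | h1 | h1
        · have : f.coeff x.1 * g.coeff x.2 ∈ p ^ 2 := by
            rw [pow_two]
            exact Ideal.mul_mem_mul (himin _ h1) (hmemp _)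
          rwa [hp2, Ideal.mem_bot] at this
        · exact absurd (Prod.ext h1 (by omega)) hne
        · rw [ih x.2 (by omega), mul_zero]
      rw [hsum, add_zero] at hc
      have hmem0 : g.coeff j * f.coeff i ∈ (⊥ : Ideal R) := by
        rw [Ideal.mem_bot, mul_comm]; exact hc
      rcases (Ideal.isPrimary_iff.mp hprimary).2 hmem0 with h0 | hrp
      · rwa [Ideal.mem_bot] at h0
      · rw [hrad] at hrp; exact absurd hrp hi
  ext j
  simp [hzero j]

private lemma polyContent_zero {R : Type*} [CommRing R] :
    polyContent (0 : R[X]) = ⊥ := by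
  rw [polyContent, Ideal.span_eq_bot]
  rintro x ⟨n, rfl⟩
  simp

/-- If the zero ideal of `R` is `p`-primary with `p² = 0`, then `R[X]` is Armendariz over
`R`. -/
theorem armendariz_of_zero_primary {R : Type*} [CommRing R] (p : Ideal R)
    (hp : p.IsPrime) (hprimary : (⊥ : Ideal R).IsPrimary)
    (hrad : (⊥ : Ideal R).radical = p) (hp2 : p ^ 2 = ⊥) (f g : R[X])
    (h : f * g = 0) : polyContent f * polyContent g = ⊥ := by
  classical
  by_cases hf : ∀ a, f.coeff a ∈ p
  · by_cases hg : ∀ a, g.coeff a ∈ p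
    · have h1 : polyContent f ≤ p := by
        rw [polyContent, Ideal.span_le]; rintro x ⟨n, rfl⟩; exact hf n
      have h2 : polyContent g ≤ p := by
        rw [polyContent, Ideal.span_le]; rintro x ⟨n, rfl⟩; exact hg n
      have : polyContent f * polyContent g ≤ p ^ 2 := by
        rw [pow_two]; exact Ideal.mul_mono h1 h2
      rw [hp2] at this
      exact le_bot_iff.mp this
    · push_neg at hg
      have hex : ∃ i, g.coeff i ∉ p := hg
      have hf0 : f = 0 := by
        refine zero_of_min_coeff p hp hprimary hrad hp2 g f (by rw [mul_comm]; exact h)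
          (Nat.find hex) (Nat.find_spec hex) ?_
        intro a ha
        by_contra hcon
        exact Nat.find_min hex ha hcon
      rw [hf0, polyContent_zero, Ideal.bot_mul]
  · push_neg at hf
    have hex : ∃ i, f.coeff i ∉ p := hf
    have hg0 : g = 0 := by
      refine zero_of_min_coeff p hp hprimary hrad hp2 f g h
        (Nat.find hex) (Nat.find_spec hex) ?_
      intro a ha
      by_contra hcon
      exact Nat.find_min hex ha hcon
    rw [hg0, polyContent_zero, Ideal.mul_bot]
end

section
/- Let R be a Prüfer domain. Then every n-absorbing ideal of R is strongly n-absorbing. -/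
open Polynomial
open scoped Pointwise

/-- A Prüfer domain: every nonzero finitely generated ideal is invertible as a fractional
ideal. -/
def IsPruferDomain (R : Type*) [CommRing R] [IsDomain R] : Prop :=
  ∀ I : Ideal R, I.FG → I ≠ ⊥ →
    ∃ J : FractionalIdeal (nonZeroDivisors R) (FractionRing R),
      (I : FractionalIdeal (nonZeroDivisors R) (FractionRing R)) * J = 1

universe v

section AvoidModule

variable {R : Type*} [CommRing R]

/-- Key avoidance lemma for finite modules over a ring satisfying the "locally comparable"
pair condition: a finite module is not the union of finitely many proper submodules. -/
private lemma avoid_module (N : ℕ) :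
    ∀ (M : Type v) [AddCommGroup M] [Module R M] [Finite M],
      Nat.card M ≤ N →
      (∀ x y : M, ∃ e t s : R, e • y = t • x ∧ (1 - e) • x = s • y) →
      ∀ {ι : Type*} (sf : Finset ι) (B : ι → Submodule R M),
        (∀ k ∈ sf, B k ≠ ⊤) → ∃ z : M, ∀ k ∈ sf, z ∉ B k := by
  induction N with
  | zero =>
    intro M _ _ _ hcard
    have : 0 < Nat.card M := Nat.card_pos
    omega
  | succ N ih =>
    intro M _ _ _ hcard hG ι sf B hB
    classical
    by_cases hchain : ∀ x y : M, (∃ r : R, y = r • x) ∨ (∃ r : R, x = r • y)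
    · -- all cyclic submodules comparable: M is cyclic, generated by a maximal element
      obtain ⟨x₀, -, hx₀⟩ := Set.Finite.exists_maximalFor
        (fun x : M => Submodule.span R {x}) Set.univ Set.finite_univ ⟨0, trivial⟩
      have hx₀top : ∀ y : M, y ∈ Submodule.span R {x₀} := by
        intro y
        rcases hchain x₀ y with ⟨r, hr⟩ | ⟨r, hr⟩
        · rw [hr]; exact Submodule.smul_mem _ r (Submodule.mem_span_singleton_self x₀)
        · have hle : Submodule.span R {x₀} ≤ Submodule.span R {y} := by
            rw [Submodule.span_le, Set.singleton_subset_iff, hr]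
            exact Submodule.smul_mem _ r (Submodule.mem_span_singleton_self y)
          have heq := hx₀ (j := y) trivial hle
          exact heq (Submodule.mem_span_singleton_self y)
      refine ⟨x₀, fun k hk hmem => hB k hk ?_⟩
      rw [eq_top_iff]
      intro y _
      have hs : Submodule.span R {x₀} ≤ B k := by
        rwa [Submodule.span_le, Set.singleton_subset_iff]
      exact hs (hx₀top y)
    · push_neg at hchain
      obtain ⟨x, y, hyx, hxy⟩ := hchain
      obtain ⟨e, t, s', hety, hfx⟩ := hG x y
      -- find a power of e acting idempotently
      have key : ∃ k : ℕ, 1 ≤ k ∧ ∀ m : M, e ^ (2 * k) • m = e ^ k • m := by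
        obtain ⟨i, j, hij, hgij⟩ :=
          Finite.exists_ne_map_eq_of_infinite (fun n : ℕ => (fun m : M => e ^ n • m))
        wlog hlt : i < j generalizing i j
        · exact this j i hij.symm hgij.symm (hij.lt_or_gt.resolve_left hlt)
        set d := j - i with hd
        have hd1 : 1 ≤ d := by omega
        have hstep : ∀ c, i ≤ c → ∀ m : M, e ^ (c + d) • m = e ^ c • m := by
          intro c hc m
          have h1 : e ^ i • m = e ^ j • m := congrFun hgij m
          calc e ^ (c + d) • m = e ^ (c - i) • (e ^ j • m) := by
                rw [smul_smul, ← pow_add]; congr 2; omega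
          _ = e ^ (c - i) • (e ^ i • m) := by rw [← h1]
          _ = e ^ c • m := by rw [smul_smul, ← pow_add]; congr 2; omega
        have hmult : ∀ (a : ℕ) (c : ℕ), i ≤ c → ∀ m : M, e ^ (c + a * d) • m = e ^ c • m := by
          intro a
          induction a with
          | zero => intro c _ m; simp
          | succ a iha =>
            intro c hc m
            have hrw : c + (a + 1) * d = (c + d) + a * d := by ring
            rw [hrw, iha (c + d) (by omega) m, hstep c hc m]
        have hile : i + 1 ≤ d * (i + 1) := Nat.le_mul_of_pos_left _ hd1
        refine ⟨d * (i + 1), by omega, fun m => ?_⟩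
        have h2 : 2 * (d * (i + 1)) = d * (i + 1) + (i + 1) * d := by ring
        rw [h2, hmult (i + 1) (d * (i + 1)) (by omega) m]
      obtain ⟨k, hk1, hE⟩ := key
      set ε := e ^ k with hε
      have hidem : ∀ m : M, ε • ε • m = ε • m := by
        intro m
        have h2 := hE m
        rw [two_mul, pow_add] at h2
        calc ε • ε • m = (e ^ k * e ^ k) • m := by rw [hε, smul_smul]
        _ = ε • m := h2
      set T₁ : Submodule R M := LinearMap.ker (ε • (LinearMap.id : M →ₗ[R] M) - LinearMap.id)
        with hT₁
      set T₂ : Submodule R M := LinearMap.ker (ε • (LinearMap.id : M →ₗ[R] M)) with hT₂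
      have hmem₁ : ∀ m : M, m ∈ T₁ ↔ ε • m = m := by
        intro m; simp [hT₁, LinearMap.mem_ker, sub_eq_zero]
      have hmem₂ : ∀ m : M, m ∈ T₂ ↔ ε • m = 0 := by
        intro m; simp [hT₂, LinearMap.mem_ker]
      have hdecomp : ∀ m : M, (ε • m) ∈ T₁ ∧ (m - ε • m) ∈ T₂ ∧ m = ε • m + (m - ε • m) := by
        intro m
        refine ⟨(hmem₁ _).mpr (hidem m), (hmem₂ _).mpr ?_, by abel⟩
        rw [smul_sub, hidem m, sub_self]
      have hT₂bot : T₂ ≠ ⊥ := by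
        intro hbot
        apply hyx
        have hfix : ∀ m : M, ε • m = m := by
          intro m
          have hm : m - ε • m ∈ T₂ := (hdecomp m).2.1
          rw [hbot, Submodule.mem_bot, sub_eq_zero] at hm
          exact hm.symm
        have hkk : k - 1 + 1 = k := by omega
        calc y = ε • y := (hfix y).symm
        _ = (e ^ (k - 1) * e) • y := by rw [hε, ← pow_succ, hkk]
        _ = e ^ (k - 1) • (e • y) := by rw [mul_smul]
        _ = e ^ (k - 1) • (t • x) := by rw [hety]
        _ = (e ^ (k - 1) * t) • x := by rw [smul_smul]
      have hT₁bot : T₁ ≠ ⊥ := by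
        intro hbot
        apply hxy
        have hkill : ∀ m : M, ε • m = 0 := by
          intro m
          have h := (hdecomp m).1
          rw [hbot, Submodule.mem_bot] at h
          exact h
        have hgeo : (1 : R) - e ^ k = (∑ i ∈ Finset.range k, e ^ i) * (1 - e) := by
          have hg := geom_sum_mul e k
          linear_combination hg
        calc x = (1 - ε) • x := by rw [sub_smul, one_smul, hkill, sub_zero]
        _ = ((∑ i ∈ Finset.range k, e ^ i) * (1 - e)) • x := by rw [hε, hgeo]
        _ = (∑ i ∈ Finset.range k, e ^ i) • ((1 - e) • x) := by rw [mul_smul]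
        _ = (∑ i ∈ Finset.range k, e ^ i) • (s' • y) := by rw [hfx]
        _ = ((∑ i ∈ Finset.range k, e ^ i) * s') • y := by rw [smul_smul]
      have hT₁top : T₁ ≠ ⊤ := by
        intro htop
        apply hT₂bot
        rw [eq_bot_iff]
        intro m hm
        have h1 : ε • m = m := (hmem₁ m).mp (htop ▸ Submodule.mem_top)
        have h2 : ε • m = 0 := (hmem₂ m).mp hm
        rw [Submodule.mem_bot, ← h1, h2]
      have hT₂top : T₂ ≠ ⊤ := by
        intro htop
        apply hT₁bot
        rw [eq_bot_iff]
        intro m hm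
        have h1 : ε • m = m := (hmem₁ m).mp hm
        have h2 : ε • m = 0 := (hmem₂ m).mp (htop ▸ Submodule.mem_top)
        rw [Submodule.mem_bot, ← h1, h2]
      have cardlt : ∀ (T : Submodule R M), T ≠ ⊤ → Nat.card T ≤ N := by
        intro T hT
        have h1 : Nat.card T = (T : Set M).ncard := Nat.card_coe_set_eq _
        have hss : (T : Set M) ⊂ Set.univ := by
          refine ⟨Set.subset_univ _, fun huniv => hT ?_⟩
          rw [eq_top_iff]
          intro m _
          exact huniv (Set.mem_univ m)
        have h2 : (T : Set M).ncard < (Set.univ : Set M).ncard :=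
          Set.ncard_lt_ncard hss Set.finite_univ
        have h3 : (Set.univ : Set M).ncard = Nat.card M := Set.ncard_univ M
        omega
      have hGsub : ∀ (T : Submodule R M) (x' y' : T),
          ∃ e' t' s'' : R, e' • y' = t' • x' ∧ (1 - e') • x' = s'' • y' := by
        intro T x' y'
        obtain ⟨e', t', s'', h1, h2⟩ := hG (x' : M) (y' : M)
        exact ⟨e', t', s'', Subtype.ext (by simpa using h1), Subtype.ext (by simpa using h2)⟩
      obtain ⟨z₁, hz₁⟩ := ih T₁ (cardlt T₁ hT₁top) (hGsub T₁)
        (sf.filter fun k => ¬ T₁ ≤ B k) (fun k => (B k).comap T₁.subtype)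
        (by
          intro k hk htop
          rw [Submodule.comap_subtype_eq_top] at htop
          exact (Finset.mem_filter.mp hk).2 htop)
      obtain ⟨z₂, hz₂⟩ := ih T₂ (cardlt T₂ hT₂top) (hGsub T₂)
        (sf.filter fun k => ¬ T₂ ≤ B k) (fun k => (B k).comap T₂.subtype)
        (by
          intro k hk htop
          rw [Submodule.comap_subtype_eq_top] at htop
          exact (Finset.mem_filter.mp hk).2 htop)
      refine ⟨(z₁ : M) + (z₂ : M), fun k hk hzmem => ?_⟩
      by_cases h1 : T₁ ≤ B k
      · by_cases h2 : T₂ ≤ B k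
        · apply hB k hk
          rw [eq_top_iff]
          intro m _
          obtain ⟨hm1, hm2, hm3⟩ := hdecomp m
          rw [hm3]
          exact (B k).add_mem (h1 hm1) (h2 hm2)
        · have hz1' : (z₁ : M) ∈ B k := h1 z₁.2
          have hz2' : (z₂ : M) ∈ B k := by
            have := (B k).sub_mem hzmem hz1'
            simpa using this
          exact hz₂ k (Finset.mem_filter.mpr ⟨hk, h2⟩)
            (by simpa [Submodule.mem_comap] using hz2')
      · have hez : ε • ((z₁ : M) + (z₂ : M)) = (z₁ : M) := by
          rw [smul_add, (hmem₁ _).mp z₁.2, (hmem₂ _).mp z₂.2, add_zero]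
        have hz1mem : (z₁ : M) ∈ B k := hez ▸ (B k).smul_mem ε hzmem
        exact hz₁ k (Finset.mem_filter.mpr ⟨hk, h1⟩)
          (by simpa [Submodule.mem_comap] using hz1mem)

/-- Avoidance for ideals: over a ring with the Prüfer pair property, an ideal contained in a
finite union of ideals is contained in one of them. -/
private lemma ideal_avoid
    (pairF : ∀ a b : R, ∃ e t s : R, e * b = t * a ∧ (1 - e) * a = s * b)
    {ι : Type*} (sf : Finset ι) (C : Ideal R) (A : ι → Ideal R)
    (hcover : ∀ x ∈ C, ∃ k ∈ sf, x ∈ A k) : ∃ k ∈ sf, C ≤ A k := by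
  classical
  by_contra hcon
  push_neg at hcon
  set p : ι → Submodule R C := fun k => Submodule.comap C.subtype (A k) with hp
  have hcovers : ⋃ k ∈ sf, ((0 : C) +ᵥ ((p k).toAddSubgroup : Set C)) = Set.univ := by
    ext m
    simp only [Set.mem_iUnion, Set.mem_univ, iff_true, zero_vadd, SetLike.mem_coe,
      Submodule.mem_toAddSubgroup, hp, Submodule.mem_comap, Submodule.coe_subtype]
    obtain ⟨k, hk, hxk⟩ := hcover (m : R) m.2
    exact ⟨k, hk, hxk⟩
  have hfilter := AddSubgroup.leftCoset_cover_filter_FiniteIndex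
    (H := fun k => (p k).toAddSubgroup) (g := fun _ => (0 : C)) (s := sf) hcovers
  set fins := sf.filter (fun i => ((p i).toAddSubgroup).FiniteIndex) with hfins
  set NN : Submodule R C := fins.inf p with hNN
  have hNle : ∀ k ∈ fins, NN ≤ p k := fun k hk => Finset.inf_le hk
  have hNfin : (NN.toAddSubgroup).FiniteIndex := by
    have hgen : ∀ (u : Finset ι), (∀ k ∈ u, ((p k).toAddSubgroup).FiniteIndex) →
        ((u.inf p).toAddSubgroup).FiniteIndex := by
      intro u
      induction u using Finset.cons_induction with
      | empty =>
        intro _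
        have htop : ((∅ : Finset ι).inf p).toAddSubgroup = ⊤ := by
          ext m; simp [Finset.inf_empty]
        rw [htop]
        infer_instance
      | cons a u ha ihu =>
        intro hu
        haveI h1 := hu a (Finset.mem_cons_self a u)
        haveI h2 := ihu (fun k hk => hu k (Finset.mem_cons.mpr (Or.inr hk)))
        have hinf : ((Finset.cons a u ha).inf p).toAddSubgroup =
            (p a).toAddSubgroup ⊓ (u.inf p).toAddSubgroup := by
          ext m; simp [Finset.inf_cons, Submodule.mem_inf]
        rw [hinf]
        infer_instance
    exact hgen fins (fun k hk => (Finset.mem_filter.mp hk).2)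
  haveI hQfin : Finite (C ⧸ NN) := AddSubgroup.finite_quotient_of_finiteIndex (H := NN.toAddSubgroup)
  have hGQ : ∀ x y : (C ⧸ NN), ∃ e t s : R, e • y = t • x ∧ (1 - e) • x = s • y := by
    intro x y
    obtain ⟨x', rfl⟩ := Submodule.Quotient.mk_surjective NN x
    obtain ⟨y', rfl⟩ := Submodule.Quotient.mk_surjective NN y
    obtain ⟨e, t, s, h1, h2⟩ := pairF (x' : R) (y' : R)
    refine ⟨e, t, s, ?_, ?_⟩
    · rw [← Submodule.Quotient.mk_smul, ← Submodule.Quotient.mk_smul]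
      exact congrArg _ (Subtype.ext (by simpa [smul_eq_mul] using h1))
    · rw [← Submodule.Quotient.mk_smul, ← Submodule.Quotient.mk_smul]
      exact congrArg _ (Subtype.ext (by simpa [smul_eq_mul] using h2))
  obtain ⟨z, hz⟩ := avoid_module (Nat.card (C ⧸ NN)) (C ⧸ NN) le_rfl hGQ fins
    (fun k => (p k).map NN.mkQ)
    (by
      intro k hk htop
      rw [Submodule.map_mkQ_eq_top, sup_eq_right.mpr (hNle k hk)] at htop
      exact hcon k (Finset.mem_of_mem_filter _ hk) ((Submodule.comap_subtype_eq_top).mp htop))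
  obtain ⟨z', rfl⟩ := Submodule.Quotient.mk_surjective NN z
  have hzmem : (z' : C) ∈ ⋃ k ∈ fins, ((0 : C) +ᵥ ((p k).toAddSubgroup : Set C)) := by
    rw [hfilter]; exact Set.mem_univ _
  simp only [Set.mem_iUnion, zero_vadd, SetLike.mem_coe, Submodule.mem_toAddSubgroup] at hzmem
  obtain ⟨k, hk, hzk⟩ := hzmem
  refine hz k hk ?_
  have := Submodule.mem_map_of_mem (f := NN.mkQ) hzk
  simpa [Submodule.mkQ_apply] using this

end AvoidModule

section Main

variable {R : Type*} [CommRing R]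

private lemma prod_le_prod_ideals {ι : Type*} (u : Finset ι) (f g : ι → Ideal R)
    (h : ∀ i ∈ u, f i ≤ g i) : ∏ i ∈ u, f i ≤ ∏ i ∈ u, g i := by
  induction u using Finset.cons_induction with
  | empty => simp
  | cons a u ha ih =>
    rw [Finset.prod_cons, Finset.prod_cons]
    exact Ideal.mul_mono (h a (Finset.mem_cons_self a u))
      (ih fun i hi => h i (Finset.mem_cons.mpr (Or.inr hi)))

private lemma key_induction
    (pairF : ∀ a b : R, ∃ e t s : R, e * b = t * a ∧ (1 - e) * a = s * b)
    {n : ℕ} {I : Ideal R} (hI : IsNAbsorbing I n) :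
    ∀ (m : ℕ) (J : Fin (n + 1) → Ideal R),
      (∀ i : Fin (n + 1), m ≤ (i : ℕ) → ∃ x, J i = Ideal.span {x}) →
      (∏ i, J i) ≤ I → ∃ j, (∏ i ∈ Finset.univ.erase j, J i) ≤ I := by
  intro m
  induction m with
  | zero =>
    intro J hprin hle
    choose x hx using fun i => hprin i (Nat.zero_le _)
    have hprod : ∀ (u : Finset (Fin (n + 1))),
        ∏ i ∈ u, J i = Ideal.span {∏ i ∈ u, x i} := by
      intro u
      rw [Finset.prod_congr rfl (fun i _ => hx i), Ideal.prod_span_singleton]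
    rw [hprod Finset.univ] at hle
    obtain ⟨j, hj⟩ := hI.2 x ((Ideal.span_singleton_le_iff_mem I).mp hle)
    exact ⟨j, by rw [hprod]; exact (Ideal.span_singleton_le_iff_mem I).mpr hj⟩
  | succ m ihm =>
    intro J hprin hle
    classical
    by_cases hm : m < n + 1
    swap
    · refine ihm J (fun i hi => ?_) hle
      exact absurd i.isLt (by omega)
    set pp : Fin (n + 1) := ⟨m, hm⟩ with hpp
    by_cases hdrop : (∏ i ∈ Finset.univ.erase pp, J i) ≤ I
    · exact ⟨pp, hdrop⟩
    have hcov : ∀ z ∈ J pp, ∃ j ∈ Finset.univ.erase pp,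
        z ∈ I.colon ((∏ i ∈ (Finset.univ.erase j).erase pp, J i : Ideal R) : Set R) := by
      intro z hz
      set J' := Function.update J pp (Ideal.span {z}) with hJ'
      have hprin' : ∀ i : Fin (n + 1), m ≤ (i : ℕ) → ∃ w, J' i = Ideal.span {w} := by
        intro i hi
        rcases eq_or_ne i pp with rfl | hne
        · exact ⟨z, Function.update_self _ _ _⟩
        · have hi1 : m + 1 ≤ (i : ℕ) := by
            rcases Nat.lt_or_ge (i : ℕ) (m + 1) with h | h
            · have hieq : (i : ℕ) = m := by omega
              exact absurd (Fin.ext hieq : i = pp) hne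
            · exact h
          obtain ⟨w, hw⟩ := hprin i hi1
          exact ⟨w, by rw [hJ', Function.update_of_ne hne]; exact hw⟩
      have hle' : (∏ i, J' i) ≤ I := by
        refine le_trans (prod_le_prod_ideals Finset.univ J' J ?_) hle
        intro i _
        rcases eq_or_ne i pp with rfl | hne
        · rw [hJ', Function.update_self]
          exact (Ideal.span_singleton_le_iff_mem _).mpr hz
        · rw [hJ', Function.update_of_ne hne]
      obtain ⟨j, hj⟩ := ihm J' hprin' hle'
      rcases eq_or_ne j pp with rfl | hjne
      · exfalso
        apply hdrop
        refine le_trans (le_of_eq ?_) hj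
        exact Finset.prod_congr rfl
          (fun i hi => (Function.update_of_ne (Finset.mem_erase.mp hi).1 _ _).symm)
      · refine ⟨j, Finset.mem_erase.mpr ⟨hjne, Finset.mem_univ _⟩, ?_⟩
        have hppmem : pp ∈ Finset.univ.erase j :=
          Finset.mem_erase.mpr ⟨hjne.symm, Finset.mem_univ _⟩
        rw [← Finset.mul_prod_erase _ _ hppmem] at hj
        rw [hJ', Function.update_self] at hj
        have hinner : ∏ i ∈ (Finset.univ.erase j).erase pp, Function.update J pp (Ideal.span {z}) i
            = ∏ i ∈ (Finset.univ.erase j).erase pp, J i :=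
          Finset.prod_congr rfl
            (fun i hi => Function.update_of_ne (Finset.mem_erase.mp hi).1 _ _)
        rw [hinner] at hj
        rw [Submodule.mem_colon]
        intro c hc
        have hmul : z * c ∈ Ideal.span {z} * ∏ i ∈ (Finset.univ.erase j).erase pp, J i :=
          Ideal.mul_mem_mul (Submodule.mem_span_singleton_self z) hc
        simpa [smul_eq_mul] using hj hmul
    obtain ⟨j, hjmem, hjle⟩ := ideal_avoid pairF (Finset.univ.erase pp) (J pp)
      (fun j => I.colon ((∏ i ∈ (Finset.univ.erase j).erase pp, J i : Ideal R) : Set R)) hcov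
    have hjne : j ≠ pp := (Finset.mem_erase.mp hjmem).1
    refine ⟨j, ?_⟩
    have hppmem : pp ∈ Finset.univ.erase j :=
      Finset.mem_erase.mpr ⟨hjne.symm, Finset.mem_univ _⟩
    rw [← Finset.mul_prod_erase _ _ hppmem, Ideal.mul_le]
    intro r hr c hc
    have := Submodule.mem_colon.mp (hjle hr) c hc
    simpa [smul_eq_mul] using this

end Main

section Prufer

variable {R : Type*} [CommRing R] [IsDomain R]

private lemma pair_of_prufer (hR : IsPruferDomain R) :
    ∀ a b : R, ∃ e t s : R, e * b = t * a ∧ (1 - e) * a = s * b := by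
  intro a b
  by_cases hab : Ideal.span {a, b} = ⊥
  · have ha : a = 0 := by
      have h : a ∈ Ideal.span {a, b} := Ideal.subset_span (by simp)
      rwa [hab, Ideal.mem_bot] at h
    have hb : b = 0 := by
      have h : b ∈ Ideal.span {a, b} := Ideal.subset_span (by simp)
      rwa [hab, Ideal.mem_bot] at h
    exact ⟨1, 0, 0, by simp [hb], by simp [ha]⟩
  · obtain ⟨Jf, hJf⟩ := hR (Ideal.span {a, b})
      (Submodule.fg_span (Set.toFinite _)) hab
    set K := FractionRing R
    have hsub : (IsLocalization.coeSubmodule K (Ideal.span {a, b})) * (Jf : Submodule R K)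
        = 1 := by
      have h := congrArg
        (fun X : FractionalIdeal (nonZeroDivisors R) K => (X : Submodule R K)) hJf
      simpa only [FractionalIdeal.coe_mul, FractionalIdeal.coe_one,
        FractionalIdeal.coe_coeIdeal] using h
    set a' := algebraMap R K a with ha'
    set b' := algebraMap R K b with hb'
    have hspan : IsLocalization.coeSubmodule K (Ideal.span {a, b})
        = Submodule.span R {a', b'} := by
      rw [IsLocalization.coeSubmodule_span]
      congr 1
      simp [Set.image_insert_eq, ha', hb']
    rw [hspan] at hsub
    have h1 : (1 : K) ∈ Submodule.span R {a', b'} * (Jf : Submodule R K) := by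
      rw [hsub]; exact Submodule.one_le.mp le_rfl
    rw [show ({a', b'} : Set K) = insert a' {b'} from rfl, Submodule.span_insert,
      Submodule.sup_mul] at h1
    obtain ⟨u', hu', v', hv', huv⟩ := Submodule.mem_sup.mp h1
    obtain ⟨u, hu, hau⟩ := Submodule.mem_span_singleton_mul.mp hu'
    obtain ⟨v, hv, hbv⟩ := Submodule.mem_span_singleton_mul.mp hv'
    have hmem1 : ∀ w : K, w ∈ (1 : Submodule R K) → ∃ r : R, algebraMap R K r = w := by
      intro w hw
      rwa [Submodule.mem_one] at hw
    have hamem : a' ∈ Submodule.span R ({a', b'} : Set K) :=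
      Submodule.subset_span (by simp)
    have hbmem : b' ∈ Submodule.span R ({a', b'} : Set K) :=
      Submodule.subset_span (by simp)
    obtain ⟨e, he⟩ := hmem1 (a' * u) (by
      rw [← hsub]; exact Submodule.mul_mem_mul hamem hu)
    obtain ⟨t, ht⟩ := hmem1 (u * b') (by
      rw [← hsub, mul_comm u b']; exact Submodule.mul_mem_mul hbmem hu)
    obtain ⟨s, hs⟩ := hmem1 (v * a') (by
      rw [← hsub, mul_comm v a']; exact Submodule.mul_mem_mul hamem hv)
    have hinj : Function.Injective (algebraMap R K) := IsFractionRing.injective R K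
    refine ⟨e, t, s, ?_, ?_⟩
    · apply hinj
      rw [map_mul, map_mul, he, ← ha', ← hb']
      linear_combination (-a') * ht
    · apply hinj
      rw [map_mul, map_mul, map_sub, map_one, he, ← ha', ← hb']
      have hone : a' * u + b' * v = 1 := by rw [hau, hbv, huv]
      linear_combination (-b') * hs + (-a') * hone
  
end Prufer

/-- In a Prüfer domain, every `n`-absorbing ideal is strongly `n`-absorbing. -/
theorem isStronglyNAbsorbing_of_prufer {R : Type*} [CommRing R] [IsDomain R]
    (hR : IsPruferDomain R) (I : Ideal R) (n : ℕ) (hn : 0 < n)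
    (hI : IsNAbsorbing I n) : IsStronglyNAbsorbing I n := by
  refine ⟨hI.1, ?_⟩
  intro J hJ
  exact key_induction (pair_of_prufer hR) hI (n + 1) J
    (fun i hi => absurd i.isLt (by omega)) hJ
end

section
/- Let R be a Dedekind domain. Then for all formal power series f, g ∈ R[[X]], the content ideal satisfies c(fg) = c(f)·c(g), where c(h) is the ideal of R generated by the coefficients of h. -/
open Polynomial

/-- The content of a formal power series: the ideal generated by its coefficients. -/
def psContent {R : Type*} [CommRing R] (f : PowerSeries R) : Ideal R :=
  Ideal.span (Set.range fun n : ℕ => PowerSeries.coeff n f)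

section Aux

variable {R : Type*} [CommRing R]

lemma coeff_mem_psContent (f : PowerSeries R) (n : ℕ) :
    PowerSeries.coeff n f ∈ psContent f :=
  Ideal.subset_span ⟨n, rfl⟩

lemma psContent_zero : psContent (0 : PowerSeries R) = ⊥ := by
  unfold psContent
  simp [Set.range_const]

lemma psContent_map {S : Type*} [CommRing S] (φ : R →+* S) (f : PowerSeries R) :
    psContent (PowerSeries.map φ f) = (psContent f).map φ := by
  unfold psContent
  rw [Ideal.map_span]
  congr 1
  rw [← Set.range_comp]
  rfl

lemma psContent_C_mul (a : R) (f : PowerSeries R) :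
    psContent (PowerSeries.C a * f) = Ideal.span {a} * psContent f := by
  have h1 : Ideal.span {a} * psContent f
      = Ideal.span (Set.range fun n => a * PowerSeries.coeff n f) := by
    rw [psContent, ← Ideal.submodule_span_eq, ← Ideal.submodule_span_eq,
      ← Ideal.submodule_span_eq, Submodule.span_singleton_mul, Submodule.smul_span]
    congr 1
    rw [Set.smul_set_range]
    simp only [smul_eq_mul]
  have h2 : (fun n => PowerSeries.coeff n (PowerSeries.C a * f))
      = fun n => a * PowerSeries.coeff n f := by
    funext n
    simp [PowerSeries.coeff_C_mul]
  unfold psContent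
  rw [h2, ← h1]
  rfl

lemma psContent_mul_le (f g : PowerSeries R) :
    psContent (f * g) ≤ psContent f * psContent g := by
  unfold psContent
  rw [Ideal.span_le]
  rintro _ ⟨n, rfl⟩
  dsimp only
  rw [PowerSeries.coeff_mul]
  exact Ideal.sum_mem _ fun p _ =>
    Ideal.mul_mem_mul (coeff_mem_psContent f p.1) (coeff_mem_psContent g p.2)

lemma psContent_mul_eq_top [IsLocalRing R] {f g : PowerSeries R}
    (hf : psContent f = ⊤) (hg : psContent g = ⊤) : psContent (f * g) = ⊤ := by
  by_contra h
  have hle : psContent (f * g) ≤ IsLocalRing.maximalIdeal R := IsLocalRing.le_maximalIdeal h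
  have key : ∀ h0 : PowerSeries R, PowerSeries.map (IsLocalRing.residue R) h0 = 0 →
      psContent h0 ≤ IsLocalRing.maximalIdeal R := by
    intro h0 hh0
    unfold psContent
    rw [Ideal.span_le]
    rintro _ ⟨n, rfl⟩
    have := congrArg (PowerSeries.coeff n) hh0
    simp only [PowerSeries.coeff_map, map_zero] at this
    exact Ideal.Quotient.eq_zero_iff_mem.mp this
  have hmap : PowerSeries.map (IsLocalRing.residue R) f *
      PowerSeries.map (IsLocalRing.residue R) g = 0 := by
    rw [← map_mul]
    ext n
    simp only [PowerSeries.coeff_map, map_zero]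
    exact Ideal.Quotient.eq_zero_iff_mem.mpr (hle (coeff_mem_psContent _ n))
  rcases mul_eq_zero.mp hmap with h0 | h0
  · have := key f h0
    rw [hf] at this
    exact (IsLocalRing.maximalIdeal.isMaximal R).ne_top (top_le_iff.mp this)
  · have := key g h0
    rw [hg] at this
    exact (IsLocalRing.maximalIdeal.isMaximal R).ne_top (top_le_iff.mp this)

/-- factor out a generator of the (principal) content. -/
lemma psContent_factor [IsDomain R] [IsPrincipalIdealRing R] {f : PowerSeries R} (hf : f ≠ 0) :
    ∃ (a : R) (f' : PowerSeries R), a ≠ 0 ∧ f = PowerSeries.C a * f' ∧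
      psContent f = Ideal.span {a} ∧ psContent f' = ⊤ := by
  obtain ⟨a, ha⟩ := (IsPrincipalIdealRing.principal (psContent f))
  rw [Ideal.submodule_span_eq] at ha
  have hdvd : ∀ n, a ∣ PowerSeries.coeff n f := fun n =>
    Ideal.mem_span_singleton.mp (ha ▸ coeff_mem_psContent f n)
  have hane : a ≠ 0 := by
    rintro rfl
    apply hf
    ext n
    have := hdvd n
    simpa using this
  refine ⟨a, PowerSeries.mk fun n => (hdvd n).choose, hane, ?_, ha, ?_⟩
  · ext n
    simp only [PowerSeries.coeff_C_mul, PowerSeries.coeff_mk]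
    exact ((hdvd n).choose_spec)
  · -- content of f' is top
    have heq : Ideal.span {a} = Ideal.span {a} * psContent (PowerSeries.mk fun n => (hdvd n).choose) := by
      rw [← psContent_C_mul, ← ha]
      congr 1
      ext n
      simp only [PowerSeries.coeff_C_mul, PowerSeries.coeff_mk]
      exact ((hdvd n).choose_spec)
    have hmem : a ∈ Ideal.span {a} * psContent (PowerSeries.mk fun n => (hdvd n).choose) := by
      rw [← heq]; exact Ideal.mem_span_singleton_self a
    rw [Ideal.mem_span_singleton_mul] at hmem
    obtain ⟨y, hy, hay⟩ := hmem
    have hy1 : y = 1 := mul_left_cancel₀ hane (by rw [hay, mul_one])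
    rw [Ideal.eq_top_iff_one]
    rwa [hy1] at hy

lemma psContent_mul_of_local [IsDomain R] [IsLocalRing R] [IsPrincipalIdealRing R]
    (f g : PowerSeries R) : psContent (f * g) = psContent f * psContent g := by
  by_cases hf : f = 0
  · subst hf; simp [psContent_zero]
  by_cases hg : g = 0
  · subst hg; simp [psContent_zero]
  obtain ⟨a, f', ha, hfa, hca, hcf'⟩ := psContent_factor hf
  obtain ⟨b, g', hb, hgb, hcb, hcg'⟩ := psContent_factor hg
  have : f * g = PowerSeries.C a * (PowerSeries.C b * (f' * g')) := by
    rw [hfa, hgb]; ring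
  rw [this, psContent_C_mul, psContent_C_mul, psContent_mul_eq_top hcf' hcg',
    Ideal.mul_top, hca, hcb]

end Aux

/-- Over a Dedekind domain, the content of power series is multiplicative. -/
theorem psContent_mul {R : Type*} [CommRing R] [IsDomain R] [IsDedekindDomain R]
    (f g : PowerSeries R) : psContent (f * g) = psContent f * psContent g := by
  by_cases hF : IsField R
  · letI := hF.toField
    exact psContent_mul_of_local f g
  · apply Ideal.eq_of_localization_maximal
    intro P hP
    have hP0 : P ≠ ⊥ := Ring.ne_bot_of_isMaximal_of_not_isField hP hF
    haveI : P.IsPrime := hP.isPrime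
    haveI : IsDiscreteValuationRing (Localization.AtPrime P) :=
      IsLocalization.AtPrime.isDiscreteValuationRing_of_dedekind_domain R hP0 _
    rw [Ideal.map_mul, ← psContent_map, ← psContent_map, ← psContent_map, map_mul]
    exact psContent_mul_of_local _ _
end
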